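/- Let F : C ⥤ X be a faithful essential localization, and assume that every pullback stable essential monomorphism in X is an isomorphism. Then a morphism m in C is a pullback stable essential monomorphism if and only if F(m) is an isomorphism in X. -/

import Mathlib

open CategoryTheory Limits

/-- A morphism `m` is an essential monomorphism if it is a monomorphism and every
morphism `f` such that `m ≫ f` is a monomorphism is itself a monomorphism. -/
def IsEssentialMono {C : Type*} [CategoryTheory.Category C] {S A : C} (m : S ⟶ A) : Prop :=
  CategoryTheory.Mono m ∧
    ∀ ⦃B : C⦄ (f : A ⟶ B), CategoryTheory.Mono (m ≫ f) → CategoryTheory.Mono f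

/-- A morphism `m : S ⟶ A` is a pullback stable essential monomorphism if for every
morphism `u : X ⟶ A` the pullback projection `S ×_A X ⟶ X` of `m` along `u` is an
essential monomorphism. -/
def IsStableEssentialMono {C : Type*} [CategoryTheory.Category C]
    [CategoryTheory.Limits.HasPullbacks C] {S A : C} (m : S ⟶ A) : Prop :=
  ∀ ⦃X : C⦄ (u : X ⟶ A), IsEssentialMono (CategoryTheory.Limits.pullback.snd m u)

section Aux

variable {C : Type*} [Category C] {X : Type*} [Category X]

/-- If `F` is faithful and preserves pullbacks, any morphism inverted by `F` is a
pullback stable essential monomorphism. -/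
lemma aux_isStableEssentialMono_of_isIso_map
    [HasPullbacks C] [HasPullbacks X]
    (F : C ⥤ X) [PreservesLimitsOfShape WalkingCospan F] [F.Faithful]
    {S A : C} {m : S ⟶ A} (h : IsIso (F.map m)) : IsStableEssentialMono m := by
  intro Z u
  have hq : IsIso (F.map (pullback.snd m u)) := by
    rw [← PreservesPullback.iso_hom_snd F m u]
    have : IsIso (pullback.snd (F.map m) (F.map u)) := by
      have := h; infer_instance
    infer_instance
  refine ⟨F.mono_of_mono_map ?_, fun B f hf => ?_⟩
  · have := hq; infer_instance
  · apply F.mono_of_mono_map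
    have hmf : Mono (F.map (pullback.snd m u ≫ f)) := F.map_mono _
    have : F.map f = inv (F.map (pullback.snd m u)) ≫ F.map (pullback.snd m u ≫ f) := by
      simp [F.map_comp]
    rw [this]
    exact mono_comp _ _

/-- A pullback stable essential monomorphism is an essential monomorphism. -/
lemma aux_isEssentialMono [HasPullbacks C] {S A : C} {m : S ⟶ A}
    (h : IsStableEssentialMono m) : IsEssentialMono m := by
  have he := h (𝟙 A)
  have hfst : pullback.fst m (𝟙 A) ≫ m = pullback.snd m (𝟙 A) := by
    simpa using pullback.condition (f := m) (g := 𝟙 A)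
  have hiso : IsIso (pullback.fst m (𝟙 A)) := inferInstance
  have hm : Mono m := by
    have : m = inv (pullback.fst m (𝟙 A)) ≫ pullback.snd m (𝟙 A) := by
      rw [← hfst]; simp
    rw [this]
    have := he.1
    exact mono_comp _ _
  refine ⟨hm, fun B f hf => ?_⟩
  apply he.2 f
  have : pullback.snd m (𝟙 A) ≫ f = pullback.fst m (𝟙 A) ≫ (m ≫ f) := by
    rw [← Category.assoc, hfst]
  rw [this]
  exact mono_comp _ _

end Aux

/-- Let `F : C ⥤ X` be a faithful essential localization such that every pullback stable
essential monomorphism in `X` is an isomorphism. Then a morphism `m` in `C` is a pullback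
stable essential monomorphism if and only if `F.map m` is an isomorphism. -/
theorem stableEssentialMono_iff_isIso_map
    {C : Type*} [Category C] {X : Type*} [Category X]
    [HasFiniteLimits C] [HasFiniteLimits X]
    (F : C ⥤ X) (G : X ⥤ C) (H : X ⥤ C)
    (adj : F ⊣ G) [PreservesFiniteLimits F] [F.Faithful] [G.Full] [G.Faithful]
    (adj' : H ⊣ F)
    (hX : ∀ ⦃S A : X⦄ (n : S ⟶ A), IsStableEssentialMono n → IsIso n)
    {S A : C} (m : S ⟶ A) :
    IsStableEssentialMono m ↔ IsIso (F.map m) := by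
  constructor
  · intro h
    have hm : Mono m := (aux_isEssentialMono h).1
    have hFm : Mono (F.map m) := F.map_mono m
    apply hX (F.map m)
    intro Y u
    -- The counit is an isomorphism since `G` is fully faithful.
    have hcu : IsIso adj.counit := adj.counit_isIso_of_R_fully_faithful
    have hcY : IsIso (adj.counit.app Y) := inferInstance
    have hcB' : ∀ Z : X, IsIso (adj.counit.app Z) := fun Z => inferInstance
    -- `F` inverts the unit.
    have hFη : IsIso (F.map (adj.unit.app A)) := by
      have h1 : F.map (adj.unit.app A) = inv (adj.counit.app (F.obj A)) :=
        IsIso.eq_inv_of_inv_hom_id (adj.left_triangle_components A)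
      rw [h1]
      infer_instance
    -- the comparison pullback in `C`
    set r1 := pullback.fst (G.map u) (adj.unit.app A) with hr1def
    set r2 := pullback.snd (G.map u) (adj.unit.app A) with hr2def
    have hFr1 : IsIso (F.map r1) := by
      rw [hr1def, ← PreservesPullback.iso_hom_fst F (G.map u) (adj.unit.app A)]
      have : IsIso (pullback.fst (F.map (G.map u)) (F.map (adj.unit.app A))) := by
        infer_instance
      infer_instance
    have hr1ess : IsEssentialMono r1 :=
      aux_isEssentialMono (aux_isStableEssentialMono_of_isIso_map F hFr1)
    -- pull `m` back along `r2`
    set ν := pullback.snd m r2 with hνdef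
    set ν' := pullback.fst m r2 with hν'def
    have hν : IsEssentialMono ν := h r2
    have hνm : Mono ν := hν.1
    -- key relation: F r2 = F r1 ≫ ε_Y ≫ u
    have hFr2 : F.map r2 = F.map r1 ≫ adj.counit.app Y ≫ u := by
      have hc : r1 ≫ G.map u = r2 ≫ adj.unit.app A :=
        pullback.condition (f := G.map u) (g := adj.unit.app A)
      have := congrArg (fun z => F.map z ≫ adj.counit.app (F.obj A)) hc
      simp only [F.map_comp, Category.assoc] at this
      rw [adj.counit_naturality u, adj.left_triangle_components A] at this
      simpa using this.symm
    -- the induced map into the pullback of `F.map m` along `u`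
    have wt : F.map ν' ≫ F.map m = (F.map ν ≫ F.map r1 ≫ adj.counit.app Y) ≫ u := by
      rw [← F.map_comp, hν'def, pullback.condition (f := m) (g := r2), F.map_comp, hFr2]
      simp [Category.assoc, hνdef]
    set t : F.obj (pullback m r2) ⟶ pullback (F.map m) u :=
      pullback.lift (F.map ν') (F.map ν ≫ F.map r1 ≫ adj.counit.app Y) wt with htdef
    have htp : t ≫ pullback.snd (F.map m) u = F.map ν ≫ F.map r1 ≫ adj.counit.app Y :=
      pullback.lift_snd _ _ _
    have hFν : Mono (F.map ν) := F.map_mono ν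
    have ht : Mono t := by
      have : Mono (t ≫ pullback.snd (F.map m) u) := by
        rw [htp]
        exact mono_comp _ _
      exact mono_of_mono t (pullback.snd (F.map m) u)
    refine ⟨inferInstance, fun B f hf => ?_⟩
    -- key monomorphism in C
    have key : Mono (ν ≫ r1 ≫ G.map f) := by
      apply F.mono_of_mono_map
      have hGf : F.map (G.map f) = adj.counit.app Y ≫ f ≫ inv (adj.counit.app B) := by
        rw [← Category.assoc, IsIso.eq_comp_inv]
        exact adj.counit_naturality f
      have : F.map (ν ≫ r1 ≫ G.map f) =
          t ≫ (pullback.snd (F.map m) u ≫ f) ≫ inv (adj.counit.app B) := by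
        simp only [F.map_comp, hGf, ← Category.assoc]
        rw [htp]
        simp [Category.assoc]
      rw [this]
      exact mono_comp _ _
    have key2 : Mono (r1 ≫ G.map f) := hν.2 (r1 ≫ G.map f) (by simpa using key)
    have key3 : Mono (G.map f) := hr1ess.2 (G.map f) key2
    exact G.mono_of_mono_map key3
  · exact fun h => aux_isStableEssentialMono_of_isIso_map F h
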